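/- arXiv:2509.22145 — 7 statements merged into one kernel-verified Lean document; each statement's English description precedes it below -/
import Mathlib

section
/- Let A be a finite nonempty set and let C be a collection of equivalence relations on A containing the equality relation 0 and the all relation 1, closed under intersection, and such that for all α, β ∈ C the relational composition α∘β lies in C and equals β∘α (so C is a bounded lattice of equivalence relations in which join is composition). Assume A is directly indecomposable with respect to C, i.e. there are no α, β ∈ C \ {0} with α ∩ β = 0 and α∘β = 1. Then: (i) every minimal element of C \ {0,1} is contained in every maximal element of C \ {0,1}; (ii) some element of C \ {0,1} is simultaneously maximal and minimal if and only if C is a three-element chain {0, α, 1}. -/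
/-- `α` is a minimal element of `C \ {⊥, ⊤}`: the only element of `C` strictly below it
is the equality relation `⊥`. -/
def IsMinIn {A : Type*} (C : Set (Setoid A)) (α : Setoid A) : Prop :=
  α ∈ C ∧ α ≠ ⊥ ∧ α ≠ ⊤ ∧ ∀ β ∈ C, β < α → β = ⊥

/-- `α` is a maximal element of `C \ {⊥, ⊤}`: the only element of `C` strictly above it
is the all relation `⊤`. -/
def IsMaxIn {A : Type*} (C : Set (Setoid A)) (α : Setoid A) : Prop :=
  α ∈ C ∧ α ≠ ⊥ ∧ α ≠ ⊤ ∧ ∀ β ∈ C, α < β → β = ⊤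

theorem stmt0 {A : Type*} [Finite A] [Nonempty A] (C : Set (Setoid A))
    (hbot : ⊥ ∈ C) (htop : ⊤ ∈ C)
    (hinf : ∀ α ∈ C, ∀ β ∈ C, α ⊓ β ∈ C)
    (hcompMem : ∀ α ∈ C, ∀ β ∈ C, ∃ γ ∈ C, γ.r = Relation.Comp α.r β.r)
    (hcompComm : ∀ α ∈ C, ∀ β ∈ C, Relation.Comp α.r β.r = Relation.Comp β.r α.r)
    (hind : ¬ ∃ α ∈ C, ∃ β ∈ C, α ≠ ⊥ ∧ β ≠ ⊥ ∧ α ⊓ β = ⊥ ∧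
      Relation.Comp α.r β.r = fun _ _ => True) :
    (∀ α, IsMinIn C α → ∀ β, IsMaxIn C β → α ≤ β) ∧
    ((∃ α, IsMinIn C α ∧ IsMaxIn C α) ↔
      ∃ α : Setoid A, α ≠ ⊥ ∧ α ≠ ⊤ ∧ C = {⊥, α, ⊤}) := by
  have hle : ∀ (r s : Setoid A), (∀ x y, r.r x y → s.r x y) → r ≤ s := by
    intro r s h
    exact fun x y hxy => h x y hxy
  have htopr : ∀ x y : A, (⊤ : Setoid A).r x y := fun x y => trivial
  -- the composition γ is an upper bound of α and β; if it equals ⊤ and α ⊓ β = ⊥ with α β ≠ ⊥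
  -- we contradict indecomposability.
  have hmain : ∀ α ∈ C, ∀ β ∈ C, α ≠ ⊥ → β ≠ ⊥ → α ⊓ β = ⊥ → ¬ α ≤ β → ¬ β ≤ α →
      (∀ γ ∈ C, β < γ → γ = ⊤) → False := by
    intro α hαC β hβC hα0 hβ0 hmeet h1 h2 hmax
    obtain ⟨γ, hγC, hγr⟩ := hcompMem α hαC β hβC
    have hαγ : α ≤ γ := hle _ _ (fun x y hxy => by
      show γ.r x y
      rw [hγr]; exact ⟨y, hxy, β.refl y⟩)
    have hβγ : β ≤ γ := hle _ _ (fun x y hxy => by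
      show γ.r x y
      rw [hγr]; exact ⟨x, α.refl x, hxy⟩)
    have hne : β ≠ γ := by rintro rfl; exact h1 hαγ
    have hγtop : γ = ⊤ := hmax γ hγC (lt_of_le_of_ne hβγ hne)
    refine hind ⟨α, hαC, β, hβC, hα0, hβ0, hmeet, ?_⟩
    rw [← hγr, hγtop]
    funext x y
    simp only [eq_iff_iff, iff_true]
    exact htopr x y
  constructor
  · intro α hα β hβ
    by_contra hab
    have hmeetlt : α ⊓ β < α := lt_of_le_of_ne inf_le_left (by
      intro h; exact hab (h ▸ inf_le_right))
    have hmeet : α ⊓ β = ⊥ := hα.2.2.2 _ (hinf α hα.1 β hβ.1) hmeetlt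
    have hba : ¬ β ≤ α := by
      intro h
      rcases lt_or_eq_of_le h with h' | h'
      · exact hβ.2.1 (hα.2.2.2 β hβ.1 h')
      · exact hab h'.ge
    exact hmain α hα.1 β hβ.1 hα.2.1 hβ.2.1 hmeet hab hba hβ.2.2.2
  · constructor
    · rintro ⟨α, hmin, hmax⟩
      refine ⟨α, hmin.2.1, hmin.2.2.1, ?_⟩
      apply Set.eq_of_subset_of_subset
      · intro β hβC
        by_cases hb : β = ⊥
        · exact Or.inl hb
        by_cases ht : β = ⊤
        · exact Or.inr (Or.inr ht)
        refine Or.inr (Or.inl ?_)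
        by_cases h1 : α ≤ β
        · rcases lt_or_eq_of_le h1 with h' | h'
          · exact absurd (hmax.2.2.2 β hβC h') ht
          · exact h'.symm
        by_cases h2 : β ≤ α
        · rcases lt_or_eq_of_le h2 with h' | h'
          · exact absurd (hmin.2.2.2 β hβC h') hb
          · exact h'
        have hmeetlt : α ⊓ β < α := lt_of_le_of_ne inf_le_left (by
          intro h; exact h1 (h ▸ inf_le_right))
        have hmeet : α ⊓ β = ⊥ := hmin.2.2.2 _ (hinf α hmin.1 β hβC) hmeetlt
        have hmeet' : β ⊓ α = ⊥ := by rw [inf_comm]; exact hmeet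
        exact absurd (hmain β hβC α hmin.1 hb hmin.2.1 hmeet' h2 h1 hmax.2.2.2) id
      · rintro β (rfl | rfl | rfl)
        · exact hbot
        · exact hmin.1
        · exact htop
    · rintro ⟨α, hb, ht, rfl⟩
      have hmem : α ∈ ({⊥, α, ⊤} : Set (Setoid A)) := Or.inr (Or.inl rfl)
      refine ⟨α, ⟨hmem, hb, ht, ?_⟩, hmem, hb, ht, ?_⟩
      · rintro β (rfl | rfl | rfl) h
        · rfl
        · exact absurd h (lt_irrefl _)
        · exact absurd (lt_of_lt_of_le h le_top) (lt_irrefl _)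
      · rintro β (rfl | rfl | rfl) h
        · exact absurd (lt_of_le_of_lt bot_le h) (lt_irrefl _)
        · exact absurd h (lt_irrefl _)
        · rfl
end

section
/- Let A be a finite nonempty set and let C be a collection of equivalence relations on A containing the equality relation 0 and the all relation 1, closed under intersection, such that for all α, β ∈ C the relational composition α∘β lies in C and equals β∘α, and such that A is directly indecomposable with respect to C (no α, β ∈ C \ {0} satisfy α ∩ β = 0 and α∘β = 1). Assume further that C is congruence slim: every element of C \ {0,1} is maximal or minimal. Then one of the following holds: (i) C is a chain with at most 4 elements; (ii) C has a unique minimal element μ, every other element of C \ {0,1} is maximal and contains μ, and C = {0, μ, 1} ∪ Max(C); (iii) C has a unique maximal element ν, every other element of C \ {0,1} is minimal and is contained in ν, and C = {0, ν, 1} ∪ Min(C). -/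
theorem stmt1 {A : Type*} [Finite A] [Nonempty A] (C : Set (Setoid A))
    (hbot : ⊥ ∈ C) (htop : ⊤ ∈ C)
    (hinf : ∀ α ∈ C, ∀ β ∈ C, α ⊓ β ∈ C)
    (hcompMem : ∀ α ∈ C, ∀ β ∈ C, ∃ γ ∈ C, γ.r = Relation.Comp α.r β.r)
    (hcompComm : ∀ α ∈ C, ∀ β ∈ C, Relation.Comp α.r β.r = Relation.Comp β.r α.r)
    (hind : ¬ ∃ α ∈ C, ∃ β ∈ C, α ≠ ⊥ ∧ β ≠ ⊥ ∧ α ⊓ β = ⊥ ∧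
      Relation.Comp α.r β.r = fun _ _ => True)
    (hslim : ∀ α ∈ C, α ≠ ⊥ → α ≠ ⊤ → IsMaxIn C α ∨ IsMinIn C α) :
    ((∀ α ∈ C, ∀ β ∈ C, α ≤ β ∨ β ≤ α) ∧ C.ncard ≤ 4) ∨
    (∃ μ, IsMinIn C μ ∧ (∀ β, IsMinIn C β → β = μ) ∧
      (∀ α ∈ C, α ≠ ⊥ → α ≠ ⊤ → α ≠ μ → IsMaxIn C α ∧ μ ≤ α) ∧
      C = {⊥, μ, ⊤} ∪ {α | IsMaxIn C α}) ∨
    (∃ ν, IsMaxIn C ν ∧ (∀ β, IsMaxIn C β → β = ν) ∧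
      (∀ α ∈ C, α ≠ ⊥ → α ≠ ⊤ → α ≠ ν → IsMinIn C α ∧ α ≤ ν) ∧
      C = {⊥, ν, ⊤} ∪ {α | IsMinIn C α}) := by
  classical
  -- The composition of two members of `C` is their join.
  have hjoin : ∀ α ∈ C, ∀ β ∈ C, α ⊔ β ∈ C ∧
      Relation.Comp α.r β.r = (α ⊔ β).r := by
    intro α hα β hβ
    obtain ⟨γ, hγC, hγr⟩ := hcompMem α hα β hβ
    have h1 : α ≤ γ := Setoid.le_def.mpr fun {x y} h => by
      show γ.r x y; rw [hγr]; exact ⟨y, h, β.refl y⟩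
    have h2 : β ≤ γ := Setoid.le_def.mpr fun {x y} h => by
      show γ.r x y; rw [hγr]; exact ⟨x, α.refl x, h⟩
    have h3 : γ ≤ α ⊔ β := Setoid.le_def.mpr fun {x y} h => by
      have h' : Relation.Comp α.r β.r x y := by
        rw [← hγr]; exact h
      obtain ⟨z, hz1, hz2⟩ := h'
      exact (α ⊔ β).trans (Setoid.le_def.mp le_sup_left hz1)
        (Setoid.le_def.mp le_sup_right hz2)
    have hγeq : γ = α ⊔ β := le_antisymm h3 (sup_le h1 h2)
    rw [hγeq] at hγC hγr
    exact ⟨hγC, hγr.symm⟩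
  -- Indecomposability in lattice form.
  have hind' : ∀ α ∈ C, ∀ β ∈ C, α ≠ ⊥ → β ≠ ⊥ → α ⊓ β = ⊥ → α ⊔ β ≠ ⊤ := by
    intro α hα β hβ hα0 hβ0 hmeet hjt
    refine hind ⟨α, hα, β, hβ, hα0, hβ0, hmeet, ?_⟩
    rw [(hjoin α hα β hβ).2, hjt]
    funext a b; simp only [eq_iff_iff, iff_true]; exact trivial
  -- Every minimal element lies below every maximal element.
  have hminmax : ∀ μ ν, IsMinIn C μ → IsMaxIn C ν → μ ≤ ν := by
    intro μ ν hμ hν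
    obtain ⟨hμC, hμ0, hμ1, hμmin⟩ := hμ
    obtain ⟨hνC, hν0, hν1, hνmax⟩ := hν
    have hmC := hinf μ hμC ν hνC
    rcases lt_or_eq_of_le (inf_le_left : μ ⊓ ν ≤ μ) with hlt | heq
    · have hb : μ ⊓ ν = ⊥ := hμmin _ hmC hlt
      have hjC := (hjoin μ hμC ν hνC).1
      rcases lt_or_eq_of_le (le_sup_right : ν ≤ μ ⊔ ν) with hlt2 | heq2
      · exact absurd (hνmax _ hjC hlt2) (hind' μ hμC ν hνC hμ0 hν0 hb)
      · rw [heq2]; exact le_sup_left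
    · rw [← heq]; exact inf_le_right
  -- Two distinct minimal elements meet in ⊥.
  have hminmeet : ∀ α β, IsMinIn C α → IsMinIn C β → α ≠ β → α ⊓ β = ⊥ := by
    intro α β hα hβ hne
    rcases lt_or_eq_of_le (inf_le_left : α ⊓ β ≤ α) with hlt | heq
    · exact hα.2.2.2 _ (hinf α hα.1 β hβ.1) hlt
    · have hle : α ≤ β := heq.symm.le.trans inf_le_right
      rcases lt_or_eq_of_le hle with hlt | h
      · exact absurd (hβ.2.2.2 _ hα.1 hlt) hα.2.1
      · exact absurd h hne
  -- The join of two distinct minimal elements is maximal.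
  have hjoinmax : ∀ α β, IsMinIn C α → IsMinIn C β → α ≠ β → IsMaxIn C (α ⊔ β) := by
    intro α β hα hβ hne
    have hjC := (hjoin α hα.1 β hβ.1).1
    have hj0 : α ⊔ β ≠ ⊥ := fun h =>
      hα.2.1 (le_bot_iff.mp (by rw [← h]; exact le_sup_left))
    have hj1 : α ⊔ β ≠ ⊤ := hind' α hα.1 β hβ.1 hα.2.1 hβ.2.1 (hminmeet α β hα hβ hne)
    rcases hslim _ hjC hj0 hj1 with h | h
    · exact h
    · exfalso
      have hlt : α < α ⊔ β := lt_of_le_of_ne le_sup_left (fun h' => by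
        have hle : β ≤ α := le_sup_right.trans h'.symm.le
        rcases lt_or_eq_of_le hle with hlt2 | h2
        · exact hβ.2.1 (hα.2.2.2 _ hβ.1 hlt2)
        · exact hne h2.symm)
      exact hα.2.1 (h.2.2.2 _ hα.1 hlt)
  -- The meet of two distinct maximal elements is minimal.
  have hmeetmin : ∀ γ δ, IsMaxIn C γ → IsMaxIn C δ → γ ≠ δ → IsMinIn C (γ ⊓ δ) := by
    intro γ δ hγ hδ hne
    have hmC := hinf γ hγ.1 δ hδ.1
    have hjtop : γ ⊔ δ = ⊤ := by
      rcases lt_or_eq_of_le (le_sup_left : γ ≤ γ ⊔ δ) with hlt | heq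
      · exact hγ.2.2.2 _ (hjoin γ hγ.1 δ hδ.1).1 hlt
      · exfalso
        have hle : δ ≤ γ := le_sup_right.trans heq.symm.le
        rcases lt_or_eq_of_le hle with hlt2 | h2
        · exact hγ.2.2.1 (hδ.2.2.2 _ hγ.1 hlt2)
        · exact hne h2.symm
    have hm0 : γ ⊓ δ ≠ ⊥ := fun h =>
      hind' γ hγ.1 δ hδ.1 hγ.2.1 hδ.2.1 h hjtop
    have hm1 : γ ⊓ δ ≠ ⊤ := fun h =>
      hγ.2.2.1 (top_le_iff.mp (by rw [← h]; exact inf_le_left))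
    have hlt : γ ⊓ δ < γ := lt_of_le_of_ne inf_le_left (fun h' => by
      have hle : γ ≤ δ := h'.symm.le.trans inf_le_right
      rcases lt_or_eq_of_le hle with hlt2 | h2
      · exact hδ.2.2.1 (hγ.2.2.2 _ hδ.1 hlt2)
      · exact hne h2)
    rcases hslim _ hmC hm0 hm1 with h | h
    · exact absurd (h.2.2.2 _ hγ.1 hlt) hγ.2.2.1
    · exact h
  by_cases hm2 : ∃ α β, IsMinIn C α ∧ IsMinIn C β ∧ α ≠ β
  · -- Two distinct minimal elements: unique maximal element ν.
    obtain ⟨α, β, hα, hβ, hne⟩ := hm2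
    right; right
    have hν : IsMaxIn C (α ⊔ β) := hjoinmax α β hα hβ hne
    set ν := α ⊔ β with hνdef
    have huniq : ∀ δ, IsMaxIn C δ → δ = ν := by
      intro δ hδ
      have hle : ν ≤ δ := sup_le (hminmax α δ hα hδ) (hminmax β δ hβ hδ)
      rcases lt_or_eq_of_le hle with hlt | h
      · exact absurd (hν.2.2.2 _ hδ.1 hlt) hδ.2.2.1
      · exact h.symm
    refine ⟨ν, hν, huniq, ?_, ?_⟩
    · intro τ hτ hτ0 hτ1 hτν
      rcases hslim τ hτ hτ0 hτ1 with h | h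
      · exact absurd (huniq τ h) hτν
      · exact ⟨h, hminmax τ ν h hν⟩
    · apply Set.eq_of_subset_of_subset
      · intro τ hτ
        simp only [Set.mem_union, Set.mem_insert_iff, Set.mem_singleton_iff,
          Set.mem_setOf_eq]
        by_cases h0 : τ = ⊥
        · exact Or.inl (Or.inl h0)
        by_cases h1 : τ = ⊤
        · exact Or.inl (Or.inr (Or.inr h1))
        by_cases hτν : τ = ν
        · exact Or.inl (Or.inr (Or.inl hτν))
        rcases hslim τ hτ h0 h1 with h | h
        · exact absurd (huniq τ h) hτν
        · exact Or.inr h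
      · intro τ hτ
        simp only [Set.mem_union, Set.mem_insert_iff, Set.mem_singleton_iff,
          Set.mem_setOf_eq] at hτ
        rcases hτ with (rfl | rfl | rfl) | h
        · exact hbot
        · exact hν.1
        · exact htop
        · exact h.1
  by_cases hM2 : ∃ γ δ, IsMaxIn C γ ∧ IsMaxIn C δ ∧ γ ≠ δ
  · -- Two distinct maximal elements: unique minimal element μ.
    obtain ⟨γ, δ, hγ, hδ, hne⟩ := hM2
    right; left
    have hμ : IsMinIn C (γ ⊓ δ) := hmeetmin γ δ hγ hδ hne
    set μ := γ ⊓ δ with hμdef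
    have huniq : ∀ τ, IsMinIn C τ → τ = μ := by
      intro τ hτ
      have hle : τ ≤ μ := le_inf (hminmax τ γ hτ hγ) (hminmax τ δ hτ hδ)
      rcases lt_or_eq_of_le hle with hlt | h
      · exact absurd (hμ.2.2.2 _ hτ.1 hlt) hτ.2.1
      · exact h
    refine ⟨μ, hμ, huniq, ?_, ?_⟩
    · intro τ hτ hτ0 hτ1 hτμ
      rcases hslim τ hτ hτ0 hτ1 with h | h
      · exact ⟨h, hminmax μ τ hμ h⟩
      · exact absurd (huniq τ h) hτμ
    · apply Set.eq_of_subset_of_subset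
      · intro τ hτ
        simp only [Set.mem_union, Set.mem_insert_iff, Set.mem_singleton_iff,
          Set.mem_setOf_eq]
        by_cases h0 : τ = ⊥
        · exact Or.inl (Or.inl h0)
        by_cases h1 : τ = ⊤
        · exact Or.inl (Or.inr (Or.inr h1))
        by_cases hτμ : τ = μ
        · exact Or.inl (Or.inr (Or.inl hτμ))
        rcases hslim τ hτ h0 h1 with h | h
        · exact Or.inr h
        · exact absurd (huniq τ h) hτμ
      · intro τ hτ
        simp only [Set.mem_union, Set.mem_insert_iff, Set.mem_singleton_iff,
          Set.mem_setOf_eq] at hτ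
        rcases hτ with (rfl | rfl | rfl) | h
        · exact hbot
        · exact hμ.1
        · exact htop
        · exact h.1
  · -- At most one minimal and one maximal element: a chain with ≤ 4 elements.
    left
    push_neg at hm2 hM2
    refine ⟨?_, ?_⟩
    · intro σ hσ τ hτ
      by_cases hσ0 : σ = ⊥
      · left; rw [hσ0]; exact bot_le
      by_cases hσ1 : σ = ⊤
      · right; rw [hσ1]; exact le_top
      by_cases hτ0 : τ = ⊥
      · right; rw [hτ0]; exact bot_le
      by_cases hτ1 : τ = ⊤
      · left; rw [hτ1]; exact le_top
      rcases hslim σ hσ hσ0 hσ1 with h1 | h1 <;> rcases hslim τ hτ hτ0 hτ1 with h2 | h2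
      · exact Or.inl (hM2 σ τ h1 h2).le
      · exact Or.inr (hminmax τ σ h2 h1)
      · exact Or.inl (hminmax σ τ h1 h2)
      · exact Or.inl (hm2 σ τ h1 h2).le
    · obtain ⟨μ, hμu⟩ : ∃ μ, ∀ τ, IsMinIn C τ → τ = μ := by
        by_cases h : ∃ μ, IsMinIn C μ
        · obtain ⟨μ, hμ⟩ := h
          exact ⟨μ, fun τ hτ => hm2 τ μ hτ hμ⟩
        · exact ⟨⊥, fun τ hτ => absurd ⟨τ, hτ⟩ h⟩
      obtain ⟨ν, hνu⟩ : ∃ ν, ∀ τ, IsMaxIn C τ → τ = ν := by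
        by_cases h : ∃ ν, IsMaxIn C ν
        · obtain ⟨ν, hν⟩ := h
          exact ⟨ν, fun τ hτ => hM2 τ ν hτ hν⟩
        · exact ⟨⊥, fun τ hτ => absurd ⟨τ, hτ⟩ h⟩
      have hsub : C ⊆ {⊥, ⊤, μ, ν} := by
        intro τ hτ
        simp only [Set.mem_insert_iff, Set.mem_singleton_iff]
        by_cases h0 : τ = ⊥
        · exact Or.inl h0
        by_cases h1 : τ = ⊤
        · exact Or.inr (Or.inl h1)
        rcases hslim τ hτ h0 h1 with h | h
        · exact Or.inr (Or.inr (Or.inr (hνu τ h)))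
        · exact Or.inr (Or.inr (Or.inl (hμu τ h)))
      have hfin : ({⊥, ⊤, μ, ν} : Set (Setoid A)).Finite :=
        (((Set.finite_singleton ν).insert μ).insert ⊤).insert ⊥
      have h1 := Set.ncard_le_ncard hsub hfin
      have h2 := Set.ncard_insert_le (⊥ : Setoid A) ({⊤, μ, ν} : Set (Setoid A))
      have h3 := Set.ncard_insert_le (⊤ : Setoid A) ({μ, ν} : Set (Setoid A))
      have h4 := Set.ncard_insert_le μ ({ν} : Set (Setoid A))
      have h5 := Set.ncard_singleton ν
      omega
end

section
/- Let Q be a finite connected faithful quandle and let N be a nilpotent normal subgroup of LMlt(Q). For a prime p let P be the (unique) Sylow p-subgroup of N. Then the orbit relation O_P is a congruence of Q, and for distinct primes p ≠ q with P, R the Sylow p- and q-subgroups of N, the intersection O_P ∩ O_R is the equality relation on Q (i.e., if g(x) = y for some g ∈ P and h(x) = y for some h ∈ R, then x = y). -/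
/-- A quandle structure on `Q`, given by its left translations: each `L x` is a
permutation of `Q`, `x * x = x`, and `x * (y * z) = (x * y) * (x * z)`
(writing `x * y` for `L x y`). -/
structure QuandleStr (Q : Type*) where
  L : Q → Equiv.Perm Q
  idem : ∀ x : Q, L x x = x
  selfDistrib : ∀ x y z : Q, L x (L y z) = L (L x y) (L x z)

namespace QuandleStr

variable {Q : Type*} (S : QuandleStr Q)

/-- The left multiplication group `LMlt(Q)`, generated by all left translations. -/
def Lmlt : Subgroup (Equiv.Perm Q) :=
  Subgroup.closure (Set.range S.L)

/-- The displacement group `Dis(Q)`, generated by all `L x * (L y)⁻¹`. -/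
def Dis : Subgroup (Equiv.Perm Q) :=
  Subgroup.closure {g : Equiv.Perm Q | ∃ x y : Q, g = S.L x * (S.L y)⁻¹}

/-- A congruence of the quandle: an equivalence relation compatible with `*` and `\`. -/
def IsCong (θ : Setoid Q) : Prop :=
  ∀ x y u v : Q, θ.r x y → θ.r u v →
    θ.r (S.L x u) (S.L y v) ∧ θ.r ((S.L x)⁻¹ u) ((S.L y)⁻¹ v)

/-- A quandle is faithful if `x ↦ L x` is injective. -/
def Faithful : Prop := Function.Injective S.L

/-- A quandle is connected if `LMlt(Q)` acts transitively. -/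
def Connected : Prop := ∀ x y : Q, ∃ g ∈ S.Lmlt, g x = y

/-- A quandle is latin if all right translations are bijective. -/
def Latin : Prop := ∀ y : Q, Function.Bijective fun x : Q => S.L x y

/-- `θ` is a minimal congruence: not equality, and the only congruence strictly
contained in it is equality. -/
def IsMinCong (θ : Setoid Q) : Prop :=
  S.IsCong θ ∧ θ ≠ ⊥ ∧ ∀ β : Setoid Q, S.IsCong β → β < θ → β = ⊥

/-- `θ` is a maximal congruence: not the all relation, and the only congruence strictly
containing it is the all relation. -/
def IsMaxCong (θ : Setoid Q) : Prop :=
  S.IsCong θ ∧ θ ≠ ⊤ ∧ ∀ β : Setoid Q, S.IsCong β → θ < β → β = ⊤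

/-- `Dis_α`: the subgroup generated by the `L x * (L y)⁻¹` with `x α y`. -/
def DisC (r : Q → Q → Prop) : Subgroup (Equiv.Perm Q) :=
  Subgroup.closure {g : Equiv.Perm Q | ∃ x y : Q, r x y ∧ g = S.L x * (S.L y)⁻¹}

/-- `Dis^α`: the elements of `Dis(Q)` displacing every point inside its `α`-class. -/
def DisUp (θ : Setoid Q) : Subgroup (Equiv.Perm Q) where
  carrier := {g : Equiv.Perm Q | g ∈ S.Dis ∧ ∀ x : Q, θ.r (g x) x}
  one_mem' := ⟨S.Dis.one_mem, fun x => θ.iseqv.refl x⟩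
  mul_mem' := by
    rintro a b ⟨ha, ha2⟩ ⟨hb, hb2⟩
    refine ⟨S.Dis.mul_mem ha hb, fun x => ?_⟩
    rw [Equiv.Perm.mul_apply]
    exact θ.iseqv.trans (ha2 (b x)) (hb2 x)
  inv_mem' := by
    rintro a ⟨ha, ha2⟩
    refine ⟨S.Dis.inv_mem ha, fun x => ?_⟩
    have h := ha2 (a⁻¹ x)
    rw [show a (a⁻¹ x) = x by simp] at h
    exact θ.iseqv.symm h

end QuandleStr

/-- The orbit equivalence relation of a subgroup of permutations. -/
def orbSetoid {Q : Type*} (N : Subgroup (Equiv.Perm Q)) : Setoid Q where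
  r x y := ∃ n ∈ N, n x = y
  iseqv := by
    refine ⟨fun x => ⟨1, N.one_mem, rfl⟩, ?_, ?_⟩
    · rintro x y ⟨n, hn, rfl⟩
      exact ⟨n⁻¹, N.inv_mem hn, by simp⟩
    · rintro x y z ⟨n, hn, rfl⟩ ⟨m, hm, rfl⟩
      exact ⟨m * n, N.mul_mem hm hn, Equiv.Perm.mul_apply m n x⟩

section Aux

variable {Q : Type*}

lemma conjL (S : QuandleStr Q) : ∀ g ∈ S.Lmlt, ∀ x : Q, g * S.L x * g⁻¹ = S.L (g x) := by
  intro g hg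
  refine Subgroup.closure_induction ?_ ?_ ?_ ?_ hg
  · rintro _ ⟨z, rfl⟩ x
    ext w
    simp only [Equiv.Perm.mul_apply]
    have := S.selfDistrib z x ((S.L z)⁻¹ w)
    rwa [show (S.L z) ((S.L z)⁻¹ w) = w by simp] at this
  · intro x; simp
  · intro a b _ _ ha hb x
    have : a * b * S.L x * (a * b)⁻¹ = a * (b * S.L x * b⁻¹) * a⁻¹ := by group
    rw [this, hb, ha, Equiv.Perm.mul_apply]
  · intro a _ ha x
    have h := ha (a⁻¹ x)
    rw [show a (a⁻¹ x) = x by simp] at h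
    rw [← h]; group

end Aux

theorem stmt2 {Q : Type*} [Finite Q] (S : QuandleStr Q)
    (hconn : S.Connected) (hfaith : S.Faithful)
    (N : Subgroup (Equiv.Perm Q)) (hNle : N ≤ S.Lmlt)
    (hNnorm : ∀ g ∈ S.Lmlt, ∀ n ∈ N, g * n * g⁻¹ ∈ N)
    (hNnilp : Group.IsNilpotent N)
    (p q : ℕ) (hp : p.Prime) (hq : q.Prime)
    (P R : Subgroup (Equiv.Perm Q))
    -- `P` is the unique Sylow `p`-subgroup of `N`:
    (hPle : P ≤ N) (hPp : IsPGroup p P)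
    (hPmax : ∀ T : Subgroup (Equiv.Perm Q), T ≤ N → IsPGroup p T → T ≤ P)
    -- `R` is the unique Sylow `q`-subgroup of `N`:
    (hRle : R ≤ N) (hRq : IsPGroup q R)
    (hRmax : ∀ T : Subgroup (Equiv.Perm Q), T ≤ N → IsPGroup q T → T ≤ R) :
    S.IsCong (orbSetoid P) ∧
    (p ≠ q → ∀ x y : Q, (∃ g ∈ P, g x = y) → (∃ h ∈ R, h x = y) → x = y) := by
  -- conjugation normality of P and R in Lmlt
  have hnormal : ∀ (T : Subgroup (Equiv.Perm Q)) (p' : ℕ), T ≤ N → IsPGroup p' T →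
      (∀ T' : Subgroup (Equiv.Perm Q), T' ≤ N → IsPGroup p' T' → T' ≤ T) →
      ∀ g ∈ S.Lmlt, ∀ n ∈ T, g * n * g⁻¹ ∈ T := by
    intro T p' hTle hTp hTmax g hg n hn
    have hmap : T.map (MulAut.conj g).toMonoidHom ≤ T := by
      refine hTmax _ ?_ (hTp.map _)
      rintro _ ⟨m, hm, rfl⟩
      simpa using hNnorm g hg m (hTle hm)
    exact hmap ⟨n, hn, by simp⟩
  have hPnorm := hnormal P p hPle hPp hPmax
  have hRnorm := hnormal R q hRle hRq hRmax
  have hPLmlt : ∀ x, x ∈ P → (x : Equiv.Perm Q) ∈ S.Lmlt := fun x hx => hNle (hPle hx)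
  constructor
  · rintro x y u v ⟨g, hg, rfl⟩ ⟨h, hh, rfl⟩
    have hLy : S.L (g x) = g * S.L x * g⁻¹ := (conjL S g (hPLmlt g hg) x).symm
    constructor
    · refine ⟨g * (S.L x * (g⁻¹ * h) * (S.L x)⁻¹), ?_, ?_⟩
      · exact P.mul_mem hg
          (hPnorm (S.L x) (Subgroup.subset_closure ⟨x, rfl⟩) _ (P.mul_mem (P.inv_mem hg) hh))
      · rw [hLy]
        simp only [Equiv.Perm.mul_apply]
        congr 1
        simp [Equiv.Perm.mul_apply]
    · refine ⟨g * ((S.L x)⁻¹ * (g⁻¹ * h) * S.L x), ?_, ?_⟩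
      · refine P.mul_mem hg ?_
        have := hPnorm (S.L x)⁻¹ (S.Lmlt.inv_mem (Subgroup.subset_closure ⟨x, rfl⟩)) _
          (P.mul_mem (P.inv_mem hg) hh)
        simpa using this
      · rw [hLy]
        simp only [mul_inv_rev, inv_inv, Equiv.Perm.mul_apply]
        congr 1
        simp [Equiv.Perm.mul_apply]
  · rintro hpq x y ⟨g, hg, rfl⟩ ⟨h, hh, hh2⟩
    have hLg : S.L (g x) = g * S.L x * g⁻¹ := (conjL S g (hPLmlt g hg) x).symm
    have hLh : S.L (g x) = h * S.L x * h⁻¹ := by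
      rw [← hh2]; exact (conjL S h (hNle (hRle hh)) x).symm
    -- the element L x * L (g x)⁻¹ lies in both P and R
    have hP : S.L x * (S.L (g x))⁻¹ ∈ P := by
      rw [hLg]
      have : S.L x * (g * S.L x * g⁻¹)⁻¹ = (S.L x * g * (S.L x)⁻¹) * g⁻¹ := by group
      rw [this]
      exact P.mul_mem (hPnorm (S.L x) (Subgroup.subset_closure ⟨x, rfl⟩) _ hg)
        (P.inv_mem hg)
    have hR : S.L x * (S.L (g x))⁻¹ ∈ R := by
      rw [hLh]
      have : S.L x * (h * S.L x * h⁻¹)⁻¹ = (S.L x * h * (S.L x)⁻¹) * h⁻¹ := by group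
      rw [this]
      exact R.mul_mem (hRnorm (S.L x) (Subgroup.subset_closure ⟨x, rfl⟩) _ hh)
        (R.inv_mem hh)
    haveI : Fact p.Prime := ⟨hp⟩
    haveI : Fact q.Prime := ⟨hq⟩
    have hdisj := IsPGroup.disjoint_of_ne p q hpq P R hPp hRq
    have : S.L x * (S.L (g x))⁻¹ = 1 := by
      rw [Subgroup.disjoint_def] at hdisj
      exact hdisj hP hR
    have hLeq : S.L x = S.L (g x) := by
      rw [mul_inv_eq_one] at this; exact this
    exact hfaith hLeq
end

section
/- Let Q be a faithful left quasigroup. If Q is subdirectly reducible, i.e. there exists a family (α_i)_{i∈I} of congruences of Q, each different from the equality relation, whose intersection is the equality relation, then LMlt(Q) is subdirectly reducible as a group: there exists a family of nontrivial normal subgroups of LMlt(Q) whose intersection is trivial. -/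
/-- A left quasigroup structure on `Q`, given by its left translations:
each `L x` is a permutation of `Q` (so `x * y = L x y` and `x \ y = (L x)⁻¹ y`). -/
structure LQStr (Q : Type*) where
  L : Q → Equiv.Perm Q

namespace LQStr

variable {Q : Type*} (S : LQStr Q)

/-- The left multiplication group `LMlt(Q)`, generated by all left translations. -/
def Lmlt : Subgroup (Equiv.Perm Q) :=
  Subgroup.closure (Set.range S.L)

/-- A congruence: an equivalence relation compatible with `*` and `\`. -/
def IsCong (θ : Setoid Q) : Prop :=
  ∀ x y u v : Q, θ.r x y → θ.r u v →
    θ.r (S.L x u) (S.L y v) ∧ θ.r ((S.L x)⁻¹ u) ((S.L y)⁻¹ v)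

/-- A left quasigroup is faithful if `x ↦ L x` is injective. -/
def Faithful : Prop := Function.Injective S.L

end LQStr

lemma lmlt_pres {Q : Type*} (S : LQStr Q) {θ : Setoid Q} (hθ : S.IsCong θ)
    {g : Equiv.Perm Q} (hg : g ∈ S.Lmlt) :
    ∀ x y, θ.r x y → θ.r (g x) (g y) ∧ θ.r (g⁻¹ x) (g⁻¹ y) := by
  induction hg using Subgroup.closure_induction with
  | mem z hz =>
      obtain ⟨a, rfl⟩ := hz
      intro x y hxy
      exact hθ a a x y (θ.refl a) hxy
  | one => intro x y hxy; simpa using hxy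
  | mul g h hg hh ihg ihh =>
      intro x y hxy
      constructor
      · exact (ihg _ _ (ihh x y hxy).1).1
      · simpa using (ihh _ _ (ihg x y hxy).2).2
  | inv g hg ihg =>
      intro x y hxy
      exact ⟨(ihg x y hxy).2, by simpa using (ihg x y hxy).1⟩

theorem stmt5 {Q : Type*} {ι : Type*} (S : LQStr Q) (hfaith : S.Faithful)
    (α : ι → Setoid Q) (hcong : ∀ i, S.IsCong (α i)) (hne : ∀ i, α i ≠ ⊥)
    (hmeet : (⨅ i, α i) = ⊥) :
    ∃ N : ι → Subgroup ↥S.Lmlt,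
      (∀ i, N i ≠ ⊥) ∧ (∀ i, (N i).Normal) ∧ (⨅ i, N i) = ⊥ := by
  refine ⟨fun i => {
    carrier := {g | ∀ x, (α i).r (g.1 x) x}
    one_mem' := fun x => (α i).refl x
    mul_mem' := by
      intro g h hg hh x
      exact (α i).trans ((lmlt_pres S (hcong i) g.2 _ _ (hh x)).1) (hg x)
    inv_mem' := by
      intro g hg x
      have := (lmlt_pres S (hcong i) g.2 _ _ (hg x)).2
      simpa using (α i).symm this }, ?_, ?_, ?_⟩
  · -- nontrivial
    intro i hbot
    apply hne i
    ext a b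
    constructor
    · intro hab
      -- use L a * (L b)⁻¹ ∈ N i
      have hin : S.L a * (S.L b)⁻¹ ∈ S.Lmlt := mul_mem (Subgroup.subset_closure ⟨a, rfl⟩)
          (inv_mem (Subgroup.subset_closure ⟨b, rfl⟩))
      have hmem : (⟨S.L a * (S.L b)⁻¹, hin⟩ : ↥S.Lmlt) ∈
          ({g : ↥S.Lmlt | ∀ x, (α i).r (g.1 x) x} : Set ↥S.Lmlt) := by
        intro x
        have h1 : (α i).r ((S.L a)⁻¹ x) ((S.L b)⁻¹ x) :=
          (hcong i a b x x hab ((α i).refl x)).2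
        have h2 := (hcong i a a _ _ ((α i).refl a) h1).1
        exact (α i).symm (by simpa using h2)
      have : (⟨S.L a * (S.L b)⁻¹, hin⟩ : ↥S.Lmlt) = 1 := by
        rw [← Subgroup.mem_bot, ← hbot]; exact hmem
      have hL : S.L a = S.L b := by
        have := congrArg Subtype.val this
        simp at this
        exact (mul_inv_eq_one.mp this)
      show a = b
      exact hfaith hL
    · intro h; exact (show a = b from h) ▸ (α i).refl a
  · intro i
    constructor
    intro g hg h x
    have h1 := (lmlt_pres S (hcong i) h.2 _ _ (hg ((h⁻¹ : ↥S.Lmlt).1 x))).1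
    have h2 : (h.1) ((h⁻¹ : ↥S.Lmlt).1 x) = x := by
      have : h * h⁻¹ = 1 := mul_inv_cancel h
      have := congrArg (fun g : ↥S.Lmlt => g.1 x) this
      simpa using this
    simpa [h2] using h1
  · rw [eq_bot_iff]
    intro g hg
    simp only [Subgroup.mem_iInf] at hg
    rw [Subgroup.mem_bot]
    ext x
    have : ∀ i, (α i).r (g.1 x) x := fun i => hg i x
    have hmem : (⨅ i, α i).r (g.1 x) x := by
      show ∀ s ∈ Set.range α, s (g.1 x) x
      rintro s ⟨i, rfl⟩
      exact this i
    rw [hmeet] at hmem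
    exact hmem
end

section
/- Let H be an abelian group, K a nilpotent group, ρ : K → Aut(H) a group homomorphism, and G = H ⋊_ρ K the corresponding semidirect product. If the center of G is trivial, then ρ is injective (ker ρ = 1). -/
/-- In a nilpotent group, every nontrivial normal subgroup meets the center
nontrivially. -/
lemma aux_normal_meets_center {K : Type*} [Group K] (hnilp : Group.IsNilpotent K)
    (N : Subgroup K) [N.Normal] (hN : N ≠ ⊥) :
    ∃ k : K, k ∈ N ∧ k ≠ 1 ∧ k ∈ Subgroup.center K := by
  obtain ⟨m, hm⟩ := hnilp.nilpotent'
  have key : ∀ n : ℕ, N ⊓ Subgroup.upperCentralSeries K n ≠ ⊥ →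
      ∃ k : K, k ∈ N ∧ k ≠ 1 ∧ k ∈ Subgroup.center K := by
    intro n
    induction n with
    | zero => simp
    | succ n ih =>
      intro h
      by_cases h' : N ⊓ Subgroup.upperCentralSeries K n = ⊥
      · obtain ⟨⟨x, hxN, hxZ⟩, hx1⟩ := Subgroup.ne_bot_iff_exists_ne_one.mp h
        have hx1 : x ≠ 1 := fun e => hx1 (Subtype.ext e)
        refine ⟨x, hxN, hx1, Subgroup.mem_center_iff.mpr fun g => ?_⟩
        have hc : x * g * x⁻¹ * g⁻¹ ∈ Subgroup.upperCentralSeries K n :=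
          (mem_upperCentralSeries_succ_iff).mp hxZ g
        have hcN : x * g * x⁻¹ * g⁻¹ ∈ N := by
          have : x * (g * x⁻¹ * g⁻¹) ∈ N :=
            N.mul_mem hxN (Subgroup.Normal.conj_mem ‹N.Normal› x⁻¹ (N.inv_mem hxN) g)
          simpa [mul_assoc] using this
        have : x * g * x⁻¹ * g⁻¹ ∈ N ⊓ Subgroup.upperCentralSeries K n := ⟨hcN, hc⟩
        rw [h'] at this
        have h1 : x * g * x⁻¹ * g⁻¹ = 1 := Subgroup.mem_bot.mp this
        exact (commutatorElement_eq_one_iff_mul_comm.mp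
          (by simpa [commutatorElement_def] using h1)).symm
      · exact ih h'
  apply key m
  rw [hm]
  simpa using hN

theorem stmt17 {H K : Type*} [CommGroup H] [Group K] (hnilp : Group.IsNilpotent K)
    (ρ : K →* MulAut H)
    (hcenter : Subgroup.center (H ⋊[ρ] K) = ⊥) :
    ρ.ker = ⊥ := by
  by_contra h
  obtain ⟨k, hkN, hk1, hkZ⟩ := aux_normal_meets_center hnilp ρ.ker h
  have hρk : ρ k = 1 := hkN
  set g : H ⋊[ρ] K := ⟨1, k⟩ with hg
  have hgZ : g ∈ Subgroup.center (H ⋊[ρ] K) := by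
    rw [Subgroup.mem_center_iff]
    intro b
    ext
    · simp [hg, hρk]
    · simp [hg, (Subgroup.mem_center_iff.mp hkZ b.right).symm]
  rw [hcenter, Subgroup.mem_bot] at hgZ
  exact hk1 (congrArg SemidirectProduct.right hgZ)
end

section
/- Let p be an odd prime and let m, n be natural numbers. If there exists an injective group homomorphism from the elementary abelian 2-group (ZMod 2)^m into the general linear group GL_n(ZMod p) (equivalently, if the semidirect product (ZMod p)^n ⋊_ρ (ZMod 2)^m has faithful action ρ), then m ≤ n. -/
namespace Stmt18Aux

/-- Sign character values. -/
def eps (p : ℕ) (a : ZMod 2) : ZMod p := if a = 0 then 1 else -1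

lemma eps_add (p : ℕ) (a b : ZMod 2) : eps p (a + b) = eps p a * eps p b := by
  have h : ∀ a : ZMod 2, a = 0 ∨ a = 1 := by decide
  have h11 : (1 + 1 : ZMod 2) = 0 := by decide
  have h10 : (1 : ZMod 2) ≠ 0 := by decide
  rcases h a with rfl | rfl <;> rcases h b with rfl | rfl <;> simp [eps, h11, h10]

lemma eps_eq_one_or (p : ℕ) (a : ZMod 2) : eps p a = 1 ∨ eps p a = -1 := by
  unfold eps; split <;> simp

/-- The pairing (character) on (ZMod 2)^m with values in ZMod p. -/
def chr (p m : ℕ) (χ x : Fin m → ZMod 2) : ZMod p := ∏ i, eps p (χ i * x i)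

lemma chr_comm (p m : ℕ) (χ x : Fin m → ZMod 2) : chr p m χ x = chr p m x χ := by
  unfold chr
  exact Finset.prod_congr rfl fun i _ => by rw [mul_comm]

lemma chr_zero_right (p m : ℕ) (χ : Fin m → ZMod 2) : chr p m χ 0 = 1 := by
  simp [chr, eps]

lemma chr_zero_left (p m : ℕ) (x : Fin m → ZMod 2) : chr p m 0 x = 1 := by
  rw [chr_comm, chr_zero_right]

lemma chr_add_right (p m : ℕ) (χ x y : Fin m → ZMod 2) :
    chr p m χ (x + y) = chr p m χ x * chr p m χ y := by
  unfold chr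
  rw [← Finset.prod_mul_distrib]
  refine Finset.prod_congr rfl fun i _ => ?_
  rw [Pi.add_apply, mul_add, eps_add]

lemma chr_add_left (p m : ℕ) (ψ χ y : Fin m → ZMod 2) :
    chr p m (ψ + χ) y = chr p m ψ y * chr p m χ y := by
  rw [chr_comm, chr_add_right, chr_comm p m y ψ, chr_comm p m y χ]

lemma chr_eq_one_or (p m : ℕ) (χ x : Fin m → ZMod 2) :
    chr p m χ x = 1 ∨ chr p m χ x = -1 := by
  unfold chr
  refine Finset.prod_induction _ (fun t => t = 1 ∨ t = -1) ?_ (Or.inl rfl) ?_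
  · rintro a b (rfl | rfl) (rfl | rfl) <;> simp
  · intro i _; exact eps_eq_one_or p _

lemma zmod2_add_self (x : Fin m → ZMod 2) : x + x = 0 := by
  funext i
  have h : ∀ a : ZMod 2, a + a = 0 := by decide
  exact h (x i)

lemma chr_sum_eq_zero (p m : ℕ) [Fact p.Prime] (h2 : (2 : ZMod p) ≠ 0) {x : Fin m → ZMod 2} (hx : x ≠ 0) :
    ∑ χ : Fin m → ZMod 2, chr p m χ x = 0 := by
  obtain ⟨j, hj⟩ : ∃ j, x j ≠ 0 := by
    by_contra h; push_neg at h; exact hx (funext fun j => h j)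
  have hxj : x j = 1 := by
    have h : ∀ a : ZMod 2, a ≠ 0 → a = 1 := by decide
    exact h _ hj
  have hsx : chr p m (Pi.single j 1) x = -1 := by
    unfold chr
    rw [Finset.prod_eq_single j
      (fun i _ hij => by simp [Pi.single_eq_of_ne hij, eps])
      (fun h => absurd (Finset.mem_univ j) h)]
    have h10 : (1 : ZMod 2) ≠ 0 := by decide
    simp [Pi.single_eq_same, hxj, eps, h10]
  set S := ∑ χ : Fin m → ZMod 2, chr p m χ x with hS
  have key : S = -S := by
    calc S = ∑ χ : Fin m → ZMod 2, chr p m (χ + Pi.single j 1) x :=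
          (Equiv.sum_comp (Equiv.addRight (Pi.single j 1)) fun χ => chr p m χ x).symm
    _ = ∑ χ : Fin m → ZMod 2, chr p m χ x * chr p m (Pi.single j 1) x := by
          refine Finset.sum_congr rfl fun χ _ => ?_
          rw [chr_add_left]
    _ = -S := by rw [hS]; simp [hsx, Finset.sum_neg_distrib]
  have h0 : 2 * S = 0 := by
    rw [two_mul]; nth_rewrite 1 [key]; ring
  rcases mul_eq_zero.mp h0 with h | h
  · exact absurd h h2
  · exact h

end Stmt18Aux

open Stmt18Aux in
theorem stmt18 (p m n : ℕ) (hp : p.Prime) (hodd : Odd p)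
    (f : Multiplicative (Fin m → ZMod 2) →* (Matrix (Fin n) (Fin n) (ZMod p))ˣ)
    (hf : Function.Injective f) :
    m ≤ n := by
  classical
  haveI : Fact p.Prime := ⟨hp⟩
  have h2 : (2 : ZMod p) ≠ 0 := by
    have hnot : ¬ (p ∣ 2) := by
      intro hdvd
      rcases (Nat.prime_two.eq_one_or_self_of_dvd p hdvd) with h | h
      · exact hp.one_lt.ne' h
      · rw [h] at hodd; exact (Nat.not_odd_iff_even.mpr (by norm_num)) hodd
    have : ((2 : ℕ) : ZMod p) ≠ 0 := by
      rw [Ne, ZMod.natCast_eq_zero_iff]; exact hnot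
    simpa using this
  have h2m : ((2 : ZMod p)) ^ m ≠ 0 := pow_ne_zero _ h2
  set g : (Fin m → ZMod 2) → Matrix (Fin n) (Fin n) (ZMod p) :=
    fun x => (f (Multiplicative.ofAdd x) : Matrix (Fin n) (Fin n) (ZMod p)) with hg_def
  have g_add : ∀ x y, g (x + y) = g x * g y := by
    intro x y
    show ((f (Multiplicative.ofAdd (x + y)) : Matrix (Fin n) (Fin n) (ZMod p))) = _
    rw [ofAdd_add, map_mul, Units.val_mul]
  have g_zero : g 0 = 1 := by
    show ((f (Multiplicative.ofAdd 0) : Matrix (Fin n) (Fin n) (ZMod p))) = 1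
    rw [ofAdd_zero, map_one, Units.val_one]
  set E : (Fin m → ZMod 2) → Matrix (Fin n) (Fin n) (ZMod p) :=
    fun χ => ∑ x, chr p m χ x • g x with hE_def
  have gE : ∀ y χ, g y * E χ = chr p m χ y • E χ := by
    intro y χ
    have step1 : g y * E χ = ∑ x, chr p m χ x • g (y + x) := by
      rw [hE_def, Finset.mul_sum]
      exact Finset.sum_congr rfl fun x _ => by rw [Matrix.mul_smul, ← g_add]
    rw [step1]
    have reindex : (∑ x, chr p m χ x • g (y + x)) =
        ∑ x, chr p m χ (y + x) • g (y + (y + x)) :=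
      (Equiv.sum_comp (Equiv.addLeft y) (fun x => chr p m χ x • g (y + x))).symm
    rw [reindex, hE_def, Finset.smul_sum]
    refine Finset.sum_congr rfl fun x _ => ?_
    rw [← add_assoc, zmod2_add_self, zero_add, chr_add_right, mul_smul]
  have card2m : (Fintype.card (Fin m → ZMod 2) : ZMod p) = (2 : ZMod p) ^ m := by
    simp [Fintype.card_fun]
  have EE : ∀ ψ χ, E ψ * E χ = (if ψ = χ then ((2 : ZMod p) ^ m) else 0) • E χ := by
    intro ψ χ
    have h1 : E ψ * E χ = ∑ y, (chr p m ψ y * chr p m χ y) • E χ := by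
      rw [hE_def, Finset.sum_mul]
      exact Finset.sum_congr rfl fun y _ => by
        rw [Matrix.smul_mul, gE, smul_smul]
    have h3 : (∑ y, (chr p m ψ y * chr p m χ y) • E χ) =
        (∑ y, chr p m (ψ + χ) y) • E χ := by
      rw [Finset.sum_smul]
      exact Finset.sum_congr rfl fun y _ => by rw [← chr_add_left]
    rw [h1, h3]
    by_cases hpc : ψ = χ
    · subst hpc
      rw [zmod2_add_self]
      rw [if_pos rfl]
      congr 1
      simp only [chr_zero_left]
      rw [Finset.sum_const, Finset.card_univ, nsmul_eq_mul, mul_one, card2m]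
    · rw [if_neg hpc]
      have hne : ψ + χ ≠ 0 := by
        intro h
        apply hpc
        have : ψ + χ + χ = 0 + χ := by rw [h]
        rwa [add_assoc, zmod2_add_self, add_zero, zero_add] at this
      have : (∑ y : Fin m → ZMod 2, chr p m (ψ + χ) y) = 0 := by
        have := chr_sum_eq_zero p m h2 hne
        calc (∑ y : Fin m → ZMod 2, chr p m (ψ + χ) y)
            = ∑ y : Fin m → ZMod 2, chr p m y (ψ + χ) :=
              Finset.sum_congr rfl fun y _ => chr_comm p m _ _
        _ = 0 := this
      rw [this]
  have sumE : (∑ χ, E χ) = ((2 : ZMod p) ^ m) • (1 : Matrix (Fin n) (Fin n) (ZMod p)) := by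
    rw [hE_def, Finset.sum_comm]
    calc (∑ x, ∑ χ : Fin m → ZMod 2, chr p m χ x • g x)
        = ∑ x, (∑ χ : Fin m → ZMod 2, chr p m χ x) • g x :=
          Finset.sum_congr rfl fun x _ => (Finset.sum_smul).symm
    _ = ((2 : ZMod p) ^ m) • g 0 := by
          rw [Finset.sum_eq_single 0]
          · congr 1
            simp only [chr_zero_right]
            rw [Finset.sum_const, Finset.card_univ, nsmul_eq_mul, mul_one, card2m]
          · intro x _ hx
            rw [chr_sum_eq_zero p m h2 hx, zero_smul]
          · intro h; exact absurd (Finset.mem_univ 0) h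
    _ = _ := by rw [g_zero]
  -- the set of nonvanishing idempotents
  set S : Finset (Fin m → ZMod 2) := Finset.univ.filter (fun χ => E χ ≠ 0) with hS_def
  have hw : ∀ χ : ↥S, ∃ w : Fin n → ZMod p, (E χ.1).mulVec w ≠ 0 := by
    rintro ⟨χ, hχ⟩
    have hne : E χ ≠ 0 := (Finset.mem_filter.mp hχ).2
    by_contra hall
    push_neg at hall
    apply hne
    ext i j
    have := congrFun (hall (Pi.single j 1)) i
    simpa using this
  set v : ↥S → (Fin n → ZMod p) := fun χ => (E χ.1).mulVec (hw χ).choose with hv_def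
  have hv : ∀ χ, v χ ≠ 0 := fun χ => (hw χ).choose_spec
  have hvE : ∀ ψ χ : ↥S, (E ψ.1).mulVec (v χ) =
      (if ψ.1 = χ.1 then ((2 : ZMod p) ^ m) else 0) • v χ := by
    intro ψ χ
    rw [hv_def]
    simp only
    rw [Matrix.mulVec_mulVec, EE]
    by_cases h : ψ.1 = χ.1 <;>
      simp [h, Matrix.smul_mulVec]
  have lin : LinearIndependent (ZMod p) v := by
    rw [Fintype.linearIndependent_iff]
    intro c hc ψ
    have h0 : (Matrix.mulVecLin (E ψ.1)) (∑ χ, c χ • v χ) = 0 := by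
      rw [hc]; simp
    rw [map_sum] at h0
    simp only [map_smul, Matrix.mulVecLin_apply] at h0
    have h1 : (∑ χ, c χ • (E ψ.1).mulVec (v χ)) = c ψ • ((2 : ZMod p) ^ m • v ψ) := by
      rw [Finset.sum_eq_single ψ]
      · rw [hvE ψ ψ, if_pos rfl]
      · intro χ _ hne
        rw [hvE ψ χ, if_neg (fun h => hne (Subtype.ext h.symm)), zero_smul, smul_zero]
      · intro h; exact absurd (Finset.mem_univ ψ) h
    rw [h1, smul_smul] at h0
    rcases smul_eq_zero.mp h0 with h | h
    · rcases mul_eq_zero.mp h with h | h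
      · exact h
      · exact absurd h h2m
    · exact absurd h (hv ψ)
  have cardS : Fintype.card ↥S ≤ n := by
    have := lin.fintype_card_le_finrank
    simpa [Module.finrank_pi] using this
  -- injection of the group into S → Bool
  set F : (Fin m → ZMod 2) → (↥S → Bool) := fun x χ => decide (chr p m χ.1 x = 1) with hF_def
  have hneg1 : (-1 : ZMod p) ≠ 1 := by
    intro h
    apply h2
    calc (2 : ZMod p) = 1 + 1 := by norm_num
    _ = -1 + 1 := by rw [h]
    _ = 0 := by ring
  have hF : Function.Injective F := by
    intro x y hxy
    have hchr : ∀ χ : Fin m → ZMod 2, E χ ≠ 0 → chr p m χ x = chr p m χ y := by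
      intro χ hχ
      have hmem : χ ∈ S := by rw [hS_def]; exact Finset.mem_filter.mpr ⟨Finset.mem_univ _, hχ⟩
      have heq := congrFun hxy ⟨χ, hmem⟩
      simp only [hF_def, decide_eq_decide] at heq
      rcases chr_eq_one_or p m χ x with h1 | h1 <;>
        rcases chr_eq_one_or p m χ y with hy1 | hy1
      · rw [h1, hy1]
      · exfalso; exact hneg1 (by rw [← hy1, ← heq.mp h1])
      · exfalso; exact hneg1 (by rw [← h1, heq.mpr hy1])
      · rw [h1, hy1]
    have hgx : ((2 : ZMod p) ^ m) • g x = ∑ χ, chr p m χ x • E χ := by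
      calc ((2 : ZMod p) ^ m) • g x = g x * (((2 : ZMod p) ^ m) • 1) := by
            rw [Matrix.mul_smul, mul_one]
      _ = g x * ∑ χ, E χ := by rw [sumE]
      _ = ∑ χ, chr p m χ x • E χ := by
            rw [Finset.mul_sum]; exact Finset.sum_congr rfl fun χ _ => gE x χ
    have hgy : ((2 : ZMod p) ^ m) • g y = ∑ χ, chr p m χ y • E χ := by
      calc ((2 : ZMod p) ^ m) • g y = g y * (((2 : ZMod p) ^ m) • 1) := by
            rw [Matrix.mul_smul, mul_one]
      _ = g y * ∑ χ, E χ := by rw [sumE]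
      _ = ∑ χ, chr p m χ y • E χ := by
            rw [Finset.mul_sum]; exact Finset.sum_congr rfl fun χ _ => gE y χ
    have hsum : (∑ χ, chr p m χ x • E χ) = ∑ χ, chr p m χ y • E χ := by
      refine Finset.sum_congr rfl fun χ _ => ?_
      by_cases hχ : E χ = 0
      · rw [hχ, smul_zero, smul_zero]
      · rw [hchr χ hχ]
    have hgeq : g x = g y := by
      have : ((2 : ZMod p) ^ m) • g x = ((2 : ZMod p) ^ m) • g y := by
        rw [hgx, hgy, hsum]
      exact smul_right_injective _ h2m this
    have : f (Multiplicative.ofAdd x) = f (Multiplicative.ofAdd y) := Units.ext hgeq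
    exact Multiplicative.ofAdd.injective (hf this)
  have hcard := Fintype.card_le_of_injective F hF
  have h2card : (2 : ℕ) ^ m ≤ 2 ^ (Fintype.card ↥S) := by
    simpa [Fintype.card_fun] using hcard
  have hmS : m ≤ Fintype.card ↥S := (Nat.pow_le_pow_iff_right (by norm_num)).mp h2card
  exact hmS.trans cardS
end

section
/- Let p be an odd prime, n a natural number, and K a finite 2-group of nilpotency class 2 whose commutator subgroup [K,K] is generated by a single element z of order 2. Let ρ : K → GL_n(ZMod p) be an injective group homomorphism (a faithful action of K on (ZMod p)^n), and suppose the semidirect product (ZMod p)^n ⋊ ⟨z⟩ formed via the restriction of ρ to the subgroup generated by z has trivial center. Then ρ(z) = −Id_n and n is even. -/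
/-- The action of an invertible `n × n` matrix over `ZMod p` on the (multiplicatively
written) group `(ZMod p)ⁿ`, identifying `GL_n(ZMod p)` with the automorphism group. -/
def glToAut (p n : ℕ) :
    (Matrix (Fin n) (Fin n) (ZMod p))ˣ →* MulAut (Multiplicative (Fin n → ZMod p)) where
  toFun A :=
    { toFun := fun v => Multiplicative.ofAdd (A.val.mulVec (Multiplicative.toAdd v))
      invFun := fun v => Multiplicative.ofAdd ((A⁻¹).val.mulVec (Multiplicative.toAdd v))
      left_inv := fun v => by
        simp [Matrix.mulVec_mulVec]
      right_inv := fun v => by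
        simp [Matrix.mulVec_mulVec]
      map_mul' := fun v w => by
        simp [Matrix.mulVec_add] }
  map_one' := by
    ext v
    simp
  map_mul' A B := by
    ext v
    simp [Matrix.mulVec_mulVec]

set_option maxHeartbeats 1000000 in
theorem stmt19 (p n : ℕ) (hp : p.Prime) (hodd : Odd p)
    {K : Type*} [Group K] [Finite K] (h2 : IsPGroup 2 K)
    -- nilpotency class 2 with `[K,K] = ⟨z⟩`, `z` of order 2:
    (hclass : commutator K ≤ Subgroup.center K)
    (z : K) (hgen : commutator K = Subgroup.zpowers z) (hz : orderOf z = 2)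
    (ρ : K →* (Matrix (Fin n) (Fin n) (ZMod p))ˣ)
    (hρ : Function.Injective ρ)
    -- the semidirect product `(ZMod p)ⁿ ⋊ ⟨z⟩` via the restriction of `ρ` has trivial center:
    (hcenter : Subgroup.center
      (Multiplicative (Fin n → ZMod p) ⋊[(glToAut p n).comp
        (ρ.comp (Subgroup.zpowers z).subtype)] ↥(Subgroup.zpowers z)) = ⊥) :
    ρ z = -1 ∧ Even n := by
  -- `ρ z` is an involution
  have hz2 : z ^ 2 = 1 := by rw [← hz]; exact pow_orderOf_eq_one z
  have hρz2 : (ρ z) ^ 2 = 1 := by rw [← map_pow, hz2, map_one]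
  -- any vector fixed by `ρ z` gives a central element, hence is zero
  have hfix : ∀ v : Fin n → ZMod p, (ρ z).val.mulVec v = v → v = 0 := by
    intro v hv
    -- fixedness by all integer powers of `ρ z`
    have hpow : ∀ m : ℤ, ((ρ z) ^ m).val.mulVec v = v := by
      have hinv : ((ρ z)⁻¹).val.mulVec v = v := by
        conv_lhs => rw [← hv]
        rw [Matrix.mulVec_mulVec, ← Units.val_mul, inv_mul_cancel, Units.val_one,
          Matrix.one_mulVec]
      intro m
      induction m using Int.induction_on with
      | zero => simp
      | succ k ih =>
          rw [zpow_add_one, Units.val_mul, ← Matrix.mulVec_mulVec, hv, ih]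
      | pred k ih =>
          rw [zpow_sub_one, Units.val_mul, ← Matrix.mulVec_mulVec, hinv, ih]
    set G := Multiplicative (Fin n → ZMod p) ⋊[(glToAut p n).comp
        (ρ.comp (Subgroup.zpowers z).subtype)] ↥(Subgroup.zpowers z) with hG
    have hmem : (⟨Multiplicative.ofAdd v, 1⟩ : G) ∈ Subgroup.center G := by
      rw [Subgroup.mem_center_iff]
      intro g
      obtain ⟨w, k⟩ := g
      obtain ⟨m, hm⟩ := k.2
      have hkfix : ((glToAut p n).comp (ρ.comp (Subgroup.zpowers z).subtype)) k
          (Multiplicative.ofAdd v) = Multiplicative.ofAdd v := by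
        have : (ρ (k : K)).val.mulVec v = v := by
          rw [← hm, map_zpow]; exact hpow m
        simp only [glToAut, MonoidHom.comp_apply, MonoidHom.coe_mk, OneHom.coe_mk,
          MulEquiv.coe_mk, Equiv.coe_fn_mk, MonoidHom.coe_comp, Function.comp_apply,
          Subgroup.coe_subtype]
        rw [toAdd_ofAdd, this]
      ext : 1
      · show w * _ = Multiplicative.ofAdd v * _
        rw [hkfix, map_one, MulAut.one_apply, mul_comm]
      · simp
    rw [hcenter, Subgroup.mem_bot] at hmem
    have := congrArg SemidirectProduct.left hmem
    simpa using this
  -- hence `ρ z` acts as `-1` on every vector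
  have hneg : ∀ v : Fin n → ZMod p, (ρ z).val.mulVec v = -v := by
    intro v
    have h2 : (ρ z).val.mulVec ((ρ z).val.mulVec v) = v := by
      rw [Matrix.mulVec_mulVec, ← Units.val_mul, ← sq, hρz2, Units.val_one,
        Matrix.one_mulVec]
    have hw : (ρ z).val.mulVec (v + (ρ z).val.mulVec v) = v + (ρ z).val.mulVec v := by
      rw [Matrix.mulVec_add, h2, add_comm]
    have := hfix _ hw
    linear_combination (norm := module) this
  have hmat : ρ z = -1 := by
    ext i j
    have := congrFun (hneg (Pi.single j 1)) i
    simpa [Matrix.mulVec_single, Matrix.neg_apply, Matrix.one_apply, Pi.single_apply] using this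
  refine ⟨hmat, ?_⟩
  -- determinant argument: `z` is in the commutator subgroup, so `det (ρ z) = 1`
  have hzcomm : z ∈ commutator K := hgen ▸ Subgroup.mem_zpowers z
  have hdet : ((Units.map (Matrix.detMonoidHom)).comp ρ) z = 1 :=
    MonoidHom.mem_ker.mp
      (Abelianization.commutator_subset_ker ((Units.map (Matrix.detMonoidHom)).comp ρ) hzcomm)
  have hdet' : ((-1 : Matrix (Fin n) (Fin n) (ZMod p))).det = 1 := by
    have := congrArg Units.val hdet
    simpa [hmat, Matrix.detMonoidHom] using this
  rw [Matrix.det_neg, Matrix.det_one, mul_one, Fintype.card_fin] at hdet'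
  by_contra hn
  rw [Nat.not_even_iff_odd] at hn
  rw [hn.neg_one_pow] at hdet'
  have h2p : Fact (2 < p) := ⟨lt_of_le_of_ne hp.two_le (fun h => by
    rw [← h] at hodd; exact (Nat.not_odd_iff_even.mpr even_two) hodd)⟩
  exact ZMod.neg_one_ne_one hdet'
end
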